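/- Let X be a set and f : X → X a map such that, for every positive integer n, the set Fix(f^n) of fixed points of the n-th iterate of f is finite. Let Z_f ∈ ℚ[[x]] be the Artin–Mazur zeta function of f, namely the unique power series Z_f ∈ 1 + x·ℚ[[x]] satisfying x·Z_f'(x) = (Σ_{n≥1} |Fix(f^n)| x^n)·Z_f(x) (so that Z_f = exp(Σ_{n≥1} |Fix(f^n)| x^n / n)). Then every coefficient of Z_f is an integer, i.e., Z_f ∈ ℤ[[x]]. -/

import Mathlib

open PowerSeries

section AMZCounting
open Function Finset

/-- The number of points of exact (minimal) period `d` is divisible by `d`. -/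
lemma AMZ.dvd_card_exact_period {S : Type*} (f : S → S) (d : ℕ) (hd : 0 < d) :
    d ∣ Nat.card {x : S // Function.minimalPeriod f x = d} := by
  classical
  have hcast : Nat.card {x : S // Function.minimalPeriod f x = d}
      = Nat.card {x : S | Function.minimalPeriod f x = d} := rfl
  rw [hcast]
  rcases Set.finite_or_infinite {x : S | Function.minimalPeriod f x = d} with hfin | hinf
  · rw [Nat.card_coe_set_eq, Set.ncard_eq_toFinset_card _ hfin]
    set T := hfin.toFinset with hT
    have hmemT : ∀ y, y ∈ T ↔ Function.minimalPeriod f y = d := by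
      intro y; simp [hT, Set.Finite.mem_toFinset]
    have hper : ∀ y ∈ T, y ∈ periodicPts f := by
      intro y hy
      rw [← minimalPeriod_pos_iff_mem_periodicPts, (hmemT y).1 hy]
      exact hd
    -- fiber over each periodic orbit has cardinality d
    have key : ∀ c ∈ T.image (periodicOrbit f),
        (T.filter (fun y => periodicOrbit f y = c)).card = d := by
      intro c hc
      obtain ⟨x₀, hx₀T, rfl⟩ := Finset.mem_image.1 hc
      have hx₀d : Function.minimalPeriod f x₀ = d := (hmemT x₀).1 hx₀T
      have hx₀p : x₀ ∈ periodicPts f := hper x₀ hx₀T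
      have hfib : T.filter (fun y => periodicOrbit f y = periodicOrbit f x₀)
          = (Finset.range d).image (fun k => f^[k] x₀) := by
        ext y
        simp only [Finset.mem_filter, Finset.mem_image, Finset.mem_range]
        constructor
        · rintro ⟨hyT, hpo⟩
          have hyp : y ∈ periodicPts f := hper y hyT
          have : y ∈ periodicOrbit f x₀ := by
            rw [← hpo]; exact self_mem_periodicOrbit hyp
          obtain ⟨n, hn⟩ := (mem_periodicOrbit_iff hx₀p).1 this
          refine ⟨n % d, Nat.mod_lt _ hd, ?_⟩
          rw [← hx₀d, iterate_mod_minimalPeriod_eq, hn]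
        · rintro ⟨k, hk, rfl⟩
          refine ⟨(hmemT _).2 ?_, periodicOrbit_apply_iterate_eq hx₀p k⟩
          rw [minimalPeriod_apply_iterate hx₀p, hx₀d]
      rw [hfib, Finset.card_image_of_injOn, Finset.card_range]
      intro i hi j hj hij
      simp only [Finset.coe_range, Set.mem_Iio] at hi hj
      exact iterate_injOn_Iio_minimalPeriod (by rw [hx₀d]; exact hi)
        (by rw [hx₀d]; exact hj) hij
    have := Finset.card_eq_sum_card_fiberwise
      (f := periodicOrbit f) (s := T) (t := T.image (periodicOrbit f))
      (fun x hx => Finset.mem_image_of_mem _ hx)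
    rw [this, Finset.sum_congr rfl key, Finset.sum_const, smul_eq_mul]
    exact Dvd.intro_left _ rfl
  · rw [Nat.card_coe_set_eq, Set.Infinite.ncard hinf]
    exact dvd_zero d

/-- Partition of `Fix(f^n)` by exact period. -/
lemma AMZ.card_fix_eq_sum {S : Type*} (f : S → S) {n : ℕ} (hn : 0 < n)
    (hfin : {x : S | f^[n] x = x}.Finite) :
    Nat.card {x : S // f^[n] x = x}
      = ∑ d ∈ n.divisors, Nat.card {x : S // Function.minimalPeriod f x = d} := by
  classical
  have hcast : Nat.card {x : S // f^[n] x = x}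
      = Nat.card {x : S | f^[n] x = x} := rfl
  rw [hcast, Nat.card_coe_set_eq, Set.ncard_eq_toFinset_card _ hfin]
  set F := hfin.toFinset with hF
  have hmemF : ∀ y, y ∈ F ↔ f^[n] y = y := by
    intro y; simp [hF, Set.Finite.mem_toFinset]
  have hmap : ∀ x ∈ F, Function.minimalPeriod f x ∈ n.divisors := by
    intro x hx
    rw [Nat.mem_divisors]
    exact ⟨Function.IsPeriodicPt.minimalPeriod_dvd ((hmemF x).1 hx), hn.ne'⟩
  rw [Finset.card_eq_sum_card_fiberwise hmap]
  refine Finset.sum_congr rfl fun d hd => ?_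
  have hEfin : {x : S | Function.minimalPeriod f x = d}.Finite := by
    refine hfin.subset fun x hx => ?_
    have : Function.minimalPeriod f x ∣ n := hx ▸ (Nat.mem_divisors.1 hd).1
    exact Function.isPeriodicPt_iff_minimalPeriod_dvd.2 this
  have hcast2 : Nat.card {x : S // Function.minimalPeriod f x = d}
      = Nat.card {x : S | Function.minimalPeriod f x = d} := rfl
  rw [hcast2, Nat.card_coe_set_eq, Set.ncard_eq_toFinset_card _ hEfin]
  congr 1
  ext y
  simp only [Finset.mem_filter, Set.Finite.mem_toFinset, Set.mem_setOf_eq, hmemF]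
  constructor
  · rintro ⟨-, h⟩; exact h
  · intro h
    refine ⟨?_, h⟩
    exact Function.isPeriodicPt_iff_minimalPeriod_dvd.2 (h ▸ (Nat.mem_divisors.1 hd).1)

end AMZCounting


namespace AMZ
open PowerSeries Finset

/-- Geometric-type series `1/(1 - X^d)`. -/
noncomputable def g (d : ℕ) : PowerSeries ℚ := mk fun n => if d ∣ n then 1 else 0

lemma coeff_g (d n : ℕ) : coeff n (g d) = if d ∣ n then 1 else 0 := coeff_mk _ _

lemma constantCoeff_g (d : ℕ) : constantCoeff (g d) = 1 := by
  rw [← coeff_zero_eq_constantCoeff, coeff_g]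
  simp

lemma g_unit_eq (d : ℕ) (hd : 0 < d) : (1 - X ^ d) * g d = 1 := by
  ext n
  rw [sub_mul, one_mul, map_sub, coeff_X_pow_mul', coeff_g, coeff_one]
  rcases eq_or_ne n 0 with rfl | hn
  · simp [hd.ne', Nat.not_succ_le_zero]
  · by_cases h : d ∣ n
    · have hle : d ≤ n := Nat.le_of_dvd (Nat.pos_of_ne_zero hn) h
      have h2 : d ∣ n - d := (Nat.dvd_sub h dvd_rfl)
      rw [if_pos h, if_pos hle, coeff_g, if_pos h2, if_neg hn, sub_self]
    · have h2 : ¬ (d ≤ n ∧ d ∣ n - d) := by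
        rintro ⟨hle, hdvd⟩
        exact h (by simpa [Nat.sub_add_cancel hle] using Nat.dvd_add hdvd (dvd_refl d))
      rw [if_neg h, if_neg hn]
      split_ifs with hle
      · rw [coeff_g, if_neg fun hdvd => h2 ⟨hle, hdvd⟩, sub_self]
      · simp
 
lemma coeff_X_mul_derivativeFun (F : PowerSeries ℚ) (n : ℕ) :
    coeff n (X * F.derivativeFun) = n * coeff n F := by
  cases n with
  | zero => simp
  | succ m =>
    rw [coeff_succ_X_mul, show F.derivativeFun = derivative ℚ F from rfl, coeff_derivative]
    push_cast; ring

lemma X_mul_derivativeFun_X_pow (d : ℕ) :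
    X * (X ^ d : PowerSeries ℚ).derivativeFun = C (d : ℚ) * X ^ d := by
  ext n
  rw [coeff_X_mul_derivativeFun, coeff_C_mul, coeff_X_pow]
  split_ifs with h
  · subst h; ring
  · ring

lemma logderiv_g (d : ℕ) (hd : 0 < d) :
    X * (g d).derivativeFun = (C (d : ℚ) * X ^ d * g d) * g d := by
  have e0 : derivativeFun ((1 - X ^ d) * g d) = 0 := by
    rw [g_unit_eq d hd, derivativeFun_one]
  rw [derivativeFun_mul] at e0
  have e1 : (1 - X ^ d) * (g d).derivativeFun
      = g d * (X ^ d : PowerSeries ℚ).derivativeFun := by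
    have hsub : derivativeFun ((1 : PowerSeries ℚ) - X ^ d)
        = - (X ^ d : PowerSeries ℚ).derivativeFun := by
      have : ((1 : PowerSeries ℚ) - X ^ d) + X ^ d = 1 := by ring
      have h2 := derivativeFun_add ((1 : PowerSeries ℚ) - X ^ d) (X ^ d)
      rw [this, derivativeFun_one] at h2
      linear_combination -h2
    rw [smul_eq_mul, smul_eq_mul, hsub] at e0
    linear_combination e0
  calc X * (g d).derivativeFun
      = ((1 - X ^ d) * g d) * (X * (g d).derivativeFun) := by
        rw [g_unit_eq d hd, one_mul]
    _ = (X * ((1 - X ^ d) * (g d).derivativeFun)) * g d := by ring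
    _ = (X * (g d * (X ^ d : PowerSeries ℚ).derivativeFun)) * g d := by rw [e1]
    _ = (X * (X ^ d : PowerSeries ℚ).derivativeFun) * g d * g d := by ring
    _ = (C (d : ℚ) * X ^ d * g d) * g d := by rw [X_mul_derivativeFun_X_pow]

/-- Logarithmic derivative of a product. -/
lemma logderiv_mul {F G A B : PowerSeries ℚ} (hF : X * F.derivativeFun = A * F)
    (hG : X * G.derivativeFun = B * G) :
    X * (F * G).derivativeFun = (A + B) * (F * G) := by
  rw [derivativeFun_mul, smul_eq_mul, smul_eq_mul]
  linear_combination G * hF + F * hG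

lemma logderiv_pow {F A : PowerSeries ℚ} (hF : X * F.derivativeFun = A * F) (m : ℕ) :
    X * (F ^ m).derivativeFun = (m : ℚ) • A * F ^ m := by
  induction m with
  | zero => simp [pow_zero, derivativeFun_one]
  | succ k ih =>
    rw [pow_succ]
    rw [logderiv_mul ih hF]
    push_cast
    rw [add_smul, one_smul]

lemma logderiv_prod {ι : Type*} (s : Finset ι) (F A : ι → PowerSeries ℚ)
    (h : ∀ i ∈ s, X * (F i).derivativeFun = A i * F i) :
    X * (∏ i ∈ s, F i).derivativeFun = (∑ i ∈ s, A i) * ∏ i ∈ s, F i := by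
  classical
  induction s using Finset.cons_induction with
  | empty => simp [derivativeFun_one]
  | cons a s ha ih =>
    rw [Finset.prod_cons, Finset.sum_cons]
    exact logderiv_mul (h a (Finset.mem_cons_self a s))
      (ih fun i hi => h i (Finset.mem_cons_of_mem hi))

end AMZ

namespace AMZ
open PowerSeries Finset

def IntC (F : PowerSeries ℚ) : Prop := ∀ n : ℕ, ∃ z : ℤ, coeff n F = (z : ℚ)

lemma IntC.one : IntC 1 := by
  intro n
  refine ⟨if n = 0 then 1 else 0, ?_⟩
  rw [coeff_one]
  split_ifs <;> simp

lemma IntC.g (d : ℕ) : IntC (g d) := by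
  intro n
  refine ⟨if d ∣ n then 1 else 0, ?_⟩
  rw [coeff_g]
  split_ifs <;> simp

lemma IntC.mul {F G : PowerSeries ℚ} (hF : IntC F) (hG : IntC G) : IntC (F * G) := by
  intro n
  choose zF hzF using hF
  choose zG hzG using hG
  refine ⟨∑ p ∈ Finset.HasAntidiagonal.antidiagonal n, zF p.1 * zG p.2, ?_⟩
  rw [coeff_mul]
  push_cast
  exact Finset.sum_congr rfl fun p _ => by rw [hzF, hzG]

lemma IntC.pow {F : PowerSeries ℚ} (hF : IntC F) (m : ℕ) : IntC (F ^ m) := by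
  induction m with
  | zero => simpa using IntC.one
  | succ k ih => rw [pow_succ]; exact ih.mul hF

lemma IntC.prod {ι : Type*} (s : Finset ι) (F : ι → PowerSeries ℚ)
    (h : ∀ i ∈ s, IntC (F i)) : IntC (∏ i ∈ s, F i) := by
  classical
  induction s using Finset.cons_induction with
  | empty => simpa using IntC.one
  | cons a s ha ih =>
    rw [Finset.prod_cons]
    exact (h a (Finset.mem_cons_self a s)).mul (ih fun i hi => h i (Finset.mem_cons_of_mem hi))

end AMZ

/-- If every iterate of `f : S → S` has finitely many fixed points, then the Artin–Mazur
zeta function `Z_f ∈ 1 + x·ℚ[[x]]`, characterized by `x·Z_f' = (Σ_{n≥1} |Fix(fⁿ)| xⁿ)·Z_f`,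
has integer coefficients. -/
theorem artin_mazur_zeta_integral
    (S : Type*) (f : S → S)
    (hfin : ∀ n : ℕ, 0 < n → {x : S | f^[n] x = x}.Finite)
    (Z : PowerSeries ℚ) (hZ0 : constantCoeff Z = 1)
    (hZde : X * Z.derivativeFun =
      (mk fun n : ℕ => if n = 0 then 0
        else (Nat.card {x : S // f^[n] x = x} : ℚ)) * Z) :
    ∀ k : ℕ, ∃ z : ℤ, coeff k Z = (z : ℚ) := by
  classical
  intro k
  set A : PowerSeries ℚ := mk fun n : ℕ => if n = 0 then 0
      else (Nat.card {x : S // f^[n] x = x} : ℚ) with hA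
  -- number of periodic orbits of exact period d
  set b : ℕ → ℕ := fun d => Nat.card {x : S // Function.minimalPeriod f x = d} / d with hb
  have hbd : ∀ d : ℕ, 0 < d →
      Nat.card {x : S // Function.minimalPeriod f x = d} = d * b d := fun d hd =>
    (Nat.mul_div_cancel' (AMZ.dvd_card_exact_period f d hd)).symm
  have haA : ∀ n : ℕ, 0 < n →
      coeff n A = ∑ d ∈ n.divisors, ((b d : ℚ) * d) := by
    intro n hn
    rw [hA, coeff_mk, if_neg hn.ne', AMZ.card_fix_eq_sum f hn (hfin n hn)]
    push_cast
    refine Finset.sum_congr rfl fun d hd => ?_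
    have hdpos : 0 < d := Nat.pos_of_mem_divisors hd
    rw [hbd d hdpos]
    push_cast
    ring
  have hA0 : coeff 0 A = 0 := by rw [hA, coeff_mk, if_pos rfl]
  -- the truncated product
  set P : PowerSeries ℚ := ∏ d ∈ Finset.Icc 1 k, AMZ.g d ^ b d with hP
  set AN : PowerSeries ℚ :=
    ∑ d ∈ Finset.Icc 1 k, C ((b d : ℚ) * d) * (X ^ d * AMZ.g d) with hAN
  have hPlog : X * P.derivativeFun = AN * P := by
    rw [hP, hAN]
    refine AMZ.logderiv_prod _ _ _ fun d hd => ?_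
    have hd1 : 0 < d := (Finset.mem_Icc.1 hd).1
    rw [AMZ.logderiv_pow (AMZ.logderiv_g d hd1) (b d), smul_eq_C_mul, map_mul]
    ring
  -- coefficients of AN agree with A up to degree k
  have hANA : ∀ n : ℕ, n ≤ k → coeff n AN = coeff n A := by
    intro n hnk
    have hterm : ∀ d : ℕ, coeff n (C ((b d : ℚ) * d) * (X ^ d * AMZ.g d))
        = if d ≤ n ∧ d ∣ n - d then (b d : ℚ) * d else 0 := by
      intro d
      rw [coeff_C_mul, coeff_X_pow_mul', AMZ.coeff_g]
      by_cases h1 : d ≤ n <;> by_cases h2 : d ∣ n - d <;> simp [h1, h2]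
    rw [hAN, map_sum]
    rcases Nat.eq_zero_or_pos n with rfl | hn
    · rw [hA0]
      refine Finset.sum_eq_zero fun d hd => ?_
      rw [hterm]
      have hd1 := (Finset.mem_Icc.1 hd).1
      have : ¬ (d ≤ 0 ∧ d ∣ 0 - d) := by rintro ⟨h1, -⟩; omega
      rw [if_neg this]
    · rw [haA n hn]
      rw [Finset.sum_congr rfl fun d _ => hterm d]
      rw [← Finset.sum_subset (s₁ := n.divisors) (s₂ := Finset.Icc 1 k) ?hsub ?hvanish]
      · refine Finset.sum_congr rfl fun d hd => ?_
        obtain ⟨hdvd, -⟩ := Nat.mem_divisors.1 hd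
        have hle : d ≤ n := Nat.le_of_dvd hn hdvd
        rw [if_pos ⟨hle, Nat.dvd_sub hdvd dvd_rfl⟩]
      case hsub =>
        intro d hd
        exact Finset.mem_Icc.2 ⟨Nat.pos_of_mem_divisors hd,
          le_trans (Nat.le_of_dvd hn (Nat.mem_divisors.1 hd).1) hnk⟩
      case hvanish =>
        intro d hd hnd
        have : ¬ (d ≤ n ∧ d ∣ n - d) := by
          rintro ⟨h1, h2⟩
          have : d ∣ n := by
            have := Nat.dvd_add h2 (dvd_refl d)
            rwa [Nat.sub_add_cancel h1] at this
          exact hnd (Nat.mem_divisors.2 ⟨this, hn.ne'⟩)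
        rw [if_neg this]
  -- constant coefficient of P
  have hP0 : constantCoeff P = 1 := by
    rw [hP, map_prod]
    refine Finset.prod_eq_one fun d _ => ?_
    rw [map_pow, AMZ.constantCoeff_g, one_pow]
  -- key induction: coefficients of Z and P agree up to degree k
  have key : ∀ n : ℕ, n ≤ k → coeff n Z = coeff n P := by
    intro n
    induction n using Nat.strong_induction_on with
    | _ n ih =>
      intro hnk
      rcases Nat.eq_zero_or_pos n with rfl | hn
      · rw [coeff_zero_eq_constantCoeff, hZ0, hP0]

      · have hrecZ : (n : ℚ) * coeff n Z
            = ∑ p ∈ Finset.HasAntidiagonal.antidiagonal n, coeff p.1 A * coeff p.2 Z := by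
          rw [← AMZ.coeff_X_mul_derivativeFun, hZde, coeff_mul]
        have hrecP : (n : ℚ) * coeff n P
            = ∑ p ∈ Finset.HasAntidiagonal.antidiagonal n, coeff p.1 AN * coeff p.2 P := by
          rw [← AMZ.coeff_X_mul_derivativeFun, hPlog, coeff_mul]
        have hsum : ∑ p ∈ Finset.HasAntidiagonal.antidiagonal n, coeff p.1 A * coeff p.2 Z
            = ∑ p ∈ Finset.HasAntidiagonal.antidiagonal n, coeff p.1 AN * coeff p.2 P := by
          refine Finset.sum_congr rfl fun p hp => ?_
          have hpsum : p.1 + p.2 = n := Finset.HasAntidiagonal.mem_antidiagonal.1 hp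
          rcases Nat.eq_zero_or_pos p.1 with h1 | h1
          · rw [h1, hA0, zero_mul, hANA 0 (Nat.zero_le k), hA0, zero_mul]
          · have hp2 : p.2 < n := by omega
            rw [hANA p.1 (by omega), ih p.2 hp2 (by omega)]
        have hne : (n : ℚ) ≠ 0 := Nat.cast_ne_zero.2 hn.ne'
        exact mul_left_cancel₀ hne (by rw [hrecZ, hsum, ← hrecP])
  -- conclude: coefficients of P are integers
  have hPint : AMZ.IntC P := by
    refine AMZ.IntC.prod _ _ fun d _ => ?_
    exact (AMZ.IntC.g d).pow (b d)
  obtain ⟨z, hz⟩ := hPint k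
  exact ⟨z, by rw [key k le_rfl, hz]⟩
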